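/- arXiv:1701.06739 — 4 statements merged into one kernel-verified Lean document; each statement's English description precedes it below -/
import Mathlib

section
/- Let (W, μ★) be a probability space, υ : W → (0,1] measurable bounded away from 0, and VE : W → ℝ bounded measurable. For θ ∈ ℝ and x ∈ [0,1], define β_{θ,x}(w) := 1{VE(w) < θ} + x·1{VE(w) = θ}, ω(θ,x) := ∫ υ·β_{θ,x} dμ★, and γ(θ,x) := ∫ υ·β_{θ,x}·VE dμ★. If θ₁ ≤ θ₂, x₁, x₂ ∈ [0,1], with x₁ ≤ x₂ in case θ₁ = θ₂, and both ω(θ₁,x₁) > 0 and ω(θ₂,x₂) > 0, then γ(θ₁,x₁)/ω(θ₁,x₁) ≤ γ(θ₂,x₂)/ω(θ₂,x₂). -/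
open MeasureTheory

theorem stmt1
    {W : Type*} [MeasurableSpace W] (μstar : Measure W) [IsProbabilityMeasure μstar]
    (ups VE : W → ℝ)
    (hups : Measurable ups) (hups' : ∀ w, 0 < ups w ∧ ups w ≤ 1)
    (hVE : Measurable VE) (hVEbdd : ∃ M : ℝ, ∀ w, |VE w| ≤ M)
    (θ1 θ2 x1 x2 : ℝ)
    (hθ : θ1 ≤ θ2) (hx1 : x1 ∈ Set.Icc (0:ℝ) 1) (hx2 : x2 ∈ Set.Icc (0:ℝ) 1)
    (hxeq : θ1 = θ2 → x1 ≤ x2)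
    (hω1 : 0 < ∫ w, ups w * ((if VE w < θ1 then (1:ℝ) else 0)
            + x1 * (if VE w = θ1 then (1:ℝ) else 0)) ∂μstar)
    (hω2 : 0 < ∫ w, ups w * ((if VE w < θ2 then (1:ℝ) else 0)
            + x2 * (if VE w = θ2 then (1:ℝ) else 0)) ∂μstar) :
    (∫ w, ups w * ((if VE w < θ1 then (1:ℝ) else 0)
        + x1 * (if VE w = θ1 then (1:ℝ) else 0)) * VE w ∂μstar)
      / (∫ w, ups w * ((if VE w < θ1 then (1:ℝ) else 0)
        + x1 * (if VE w = θ1 then (1:ℝ) else 0)) ∂μstar)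
    ≤ (∫ w, ups w * ((if VE w < θ2 then (1:ℝ) else 0)
        + x2 * (if VE w = θ2 then (1:ℝ) else 0)) * VE w ∂μstar)
      / (∫ w, ups w * ((if VE w < θ2 then (1:ℝ) else 0)
        + x2 * (if VE w = θ2 then (1:ℝ) else 0)) ∂μstar) := by
  obtain ⟨M, hM⟩ := hVEbdd
  set M1 : ℝ := max M 1 with hM1def
  have hM1 : ∀ w, |VE w| ≤ M1 := fun w => (hM w).trans (le_max_left _ _)
  set β1 : W → ℝ := fun w => (if VE w < θ1 then (1:ℝ) else 0)
      + x1 * (if VE w = θ1 then (1:ℝ) else 0) with hβ1def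
  set β2 : W → ℝ := fun w => (if VE w < θ2 then (1:ℝ) else 0)
      + x2 * (if VE w = θ2 then (1:ℝ) else 0) with hβ2def
  have hβ1meas : Measurable β1 := by
    apply Measurable.add
    · exact Measurable.ite (measurableSet_lt hVE measurable_const) measurable_const
        measurable_const
    · exact (Measurable.ite (hVE (measurableSet_singleton θ1)) measurable_const
        measurable_const).const_mul x1
  have hβ2meas : Measurable β2 := by
    apply Measurable.add
    · exact Measurable.ite (measurableSet_lt hVE measurable_const) measurable_const
        measurable_const
    · exact (Measurable.ite (hVE (measurableSet_singleton θ2)) measurable_const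
        measurable_const).const_mul x2
  have hβ1mem : ∀ w, 0 ≤ β1 w ∧ β1 w ≤ 1 := by
    intro w
    simp only [hβ1def]
    split_ifs with h1 h2 h2
    · exact absurd h1 (by simp [h2])
    · constructor <;> nlinarith [hx1.1, hx1.2]
    · constructor <;> nlinarith [hx1.1, hx1.2]
    · constructor <;> nlinarith [hx1.1, hx1.2]
  have hβ2mem : ∀ w, 0 ≤ β2 w ∧ β2 w ≤ 1 := by
    intro w
    simp only [hβ2def]
    split_ifs with h1 h2 h2
    · exact absurd h1 (by simp [h2])
    · constructor <;> nlinarith [hx2.1, hx2.2]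
    · constructor <;> nlinarith [hx2.1, hx2.2]
    · constructor <;> nlinarith [hx2.1, hx2.2]
  have hβmono : ∀ w, β1 w ≤ β2 w := by
    intro w
    rcases lt_trichotomy (VE w) θ1 with h | h | h
    · have h2 : VE w < θ2 := h.trans_le hθ
      simp [hβ1def, hβ2def, h, h2, h.ne, h2.ne]
    · rcases eq_or_lt_of_le hθ with hθe | hθe
      · subst hθe
        simp only [hβ1def, hβ2def, h, lt_irrefl, if_true, if_false, if_neg (lt_irrefl θ1)]
        have := hxeq rfl
        simpa using this
      · have h2 : VE w < θ2 := h ▸ hθe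
        simp only [hβ1def, hβ2def, h, lt_irrefl, if_false, if_true, if_pos rfl, if_pos hθe,
          if_neg hθe.ne]
        nlinarith [hx1.2, hx2.1]
    · have h1 : ¬ VE w < θ1 := not_lt.mpr h.le
      have h1' : VE w ≠ θ1 := h.ne'
      have : β1 w = 0 := by simp [hβ1def, h1, h1']
      rw [this]; exact (hβ2mem w).1
  -- integrability
  have key : ∀ (C : ℝ) (f : W → ℝ), Measurable f → (∀ w, |f w| ≤ C) →
      Integrable f μstar := by
    intro C f hf hb
    exact (integrable_const C).mono' hf.aestronglyMeasurable (ae_of_all _ hb)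
  have hub : ∀ w, |ups w * β1 w| ≤ 1 := by
    intro w
    rw [abs_mul, abs_of_nonneg (hups' w).1.le, abs_of_nonneg (hβ1mem w).1]
    exact mul_le_one₀ (hups' w).2 (hβ1mem w).1 (hβ1mem w).2
  have hub2 : ∀ w, |ups w * β2 w| ≤ 1 := by
    intro w
    rw [abs_mul, abs_of_nonneg (hups' w).1.le, abs_of_nonneg (hβ2mem w).1]
    exact mul_le_one₀ (hups' w).2 (hβ2mem w).1 (hβ2mem w).2
  have hint1 : Integrable (fun w => ups w * β1 w) μstar :=
    key 1 _ (hups.mul hβ1meas) hub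
  have hint2 : Integrable (fun w => ups w * β2 w) μstar :=
    key 1 _ (hups.mul hβ2meas) hub2
  have hgb1 : ∀ w, |ups w * β1 w * VE w| ≤ M1 := by
    intro w
    rw [abs_mul]
    calc |ups w * β1 w| * |VE w| ≤ 1 * M1 :=
          mul_le_mul (hub w) (hM1 w) (abs_nonneg _) zero_le_one
    _ = M1 := one_mul _
  have hgb2 : ∀ w, |ups w * β2 w * VE w| ≤ M1 := by
    intro w
    rw [abs_mul]
    calc |ups w * β2 w| * |VE w| ≤ 1 * M1 :=
          mul_le_mul (hub2 w) (hM1 w) (abs_nonneg _) zero_le_one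
    _ = M1 := one_mul _
  have hgint1 : Integrable (fun w => ups w * β1 w * VE w) μstar :=
    key M1 _ ((hups.mul hβ1meas).mul hVE) hgb1
  have hgint2 : Integrable (fun w => ups w * β2 w * VE w) μstar :=
    key M1 _ ((hups.mul hβ2meas).mul hVE) hgb2
  set ω1 := ∫ w, ups w * β1 w ∂μstar with hω1def
  set ω2 := ∫ w, ups w * β2 w ∂μstar with hω2def
  set γ1 := ∫ w, ups w * β1 w * VE w ∂μstar with hγ1def
  set γ2 := ∫ w, ups w * β2 w * VE w ∂μstar with hγ2def
  have hωmono : ω1 ≤ ω2 := by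
    apply integral_mono hint1 hint2
    intro w
    exact mul_le_mul_of_nonneg_left (hβmono w) (hups' w).1.le
  have hγ1le : γ1 ≤ θ1 * ω1 := by
    have hpt : ∀ w, ups w * β1 w * VE w ≤ θ1 * (ups w * β1 w) := by
      intro w
      rcases le_or_gt (VE w) θ1 with h | h
      · calc ups w * β1 w * VE w ≤ ups w * β1 w * θ1 :=
              mul_le_mul_of_nonneg_left h (mul_nonneg (hups' w).1.le (hβ1mem w).1)
        _ = θ1 * (ups w * β1 w) := by ring
      · have hz : β1 w = 0 := by simp [hβ1def, not_lt.mpr h.le, h.ne']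
        simp [hz]
    calc γ1 ≤ ∫ w, θ1 * (ups w * β1 w) ∂μstar :=
          integral_mono hgint1 (hint1.const_mul θ1) hpt
    _ = θ1 * ω1 := by rw [integral_const_mul]
  have hcross : γ1 + θ1 * ω2 ≤ γ2 + θ1 * ω1 := by
    have hpt : ∀ w, ups w * β1 w * VE w + θ1 * (ups w * β2 w)
        ≤ ups w * β2 w * VE w + θ1 * (ups w * β1 w) := by
      intro w
      rcases lt_or_ge (VE w) θ1 with h | h
      · have h2 : VE w < θ2 := h.trans_le hθ
        have heq : β1 w = β2 w := by simp [hβ1def, hβ2def, h, h2, h.ne, h2.ne]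
        rw [heq]
      · nlinarith [mul_nonneg (mul_nonneg (hups' w).1.le
          (sub_nonneg.2 (hβmono w))) (sub_nonneg.2 h)]
    have : ∫ w, (ups w * β1 w * VE w + θ1 * (ups w * β2 w)) ∂μstar
        ≤ ∫ w, (ups w * β2 w * VE w + θ1 * (ups w * β1 w)) ∂μstar :=
      integral_mono (by exact hgint1.add (hint2.const_mul θ1))
        (by exact hgint2.add (hint1.const_mul θ1)) hpt
    rwa [integral_add hgint1 (hint2.const_mul θ1),
      integral_add hgint2 (hint1.const_mul θ1),
      integral_const_mul, integral_const_mul] at this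
  rw [div_le_div_iff₀ hω1 hω2]
  nlinarith [mul_le_mul_of_nonneg_right hγ1le (sub_nonneg.2 hωmono),
    mul_le_mul_of_nonneg_right hcross hω1.le]
end

section
/- Let (W, μ★) be a probability space, υ : W → [δ,1] measurable with δ > 0, and VE : W → ℝ bounded measurable. Suppose λ ≡ 0 and μ₁ < μ₂ are two values in (0, ∫ υ dμ★]. Define θ_μ := sup{θ : ∫ υ·1{VE < θ} dμ★ ≤ μ} and, taking η_μ minimal with ∫ υ·(1{VE < θ_μ} + η_μ 1{VE = θ_μ}) dμ★ = μ, set φ_μ := ∫ υ·β_μ·VE dμ★ / ∫ υ·β_μ dμ★ with β_μ := 1{VE < θ_μ} + η_μ 1{VE = θ_μ}. Then φ_{μ₁} ≤ φ_{μ₂}. -/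
open MeasureTheory

namespace Stmt2Aux

variable {W : Type*} [MeasurableSpace W]

set_option linter.unusedSectionVars false
set_option linter.unusedVariables false

/-- the weight function -/
noncomputable def bf (VE : W → ℝ) (θ η : ℝ) (w : W) : ℝ :=
  (if VE w < θ then (1:ℝ) else 0) + η * (if VE w = θ then (1:ℝ) else 0)

lemma bf_nonneg (VE : W → ℝ) (θ : ℝ) {η : ℝ} (h0 : 0 ≤ η) (w : W) :
    0 ≤ bf VE θ η w := by
  unfold bf; split_ifs <;> linarith

lemma bf_le_one (VE : W → ℝ) (θ : ℝ) {η : ℝ} (h0 : 0 ≤ η) (h1 : η ≤ 1) (w : W) :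
    bf VE θ η w ≤ 1 := by
  unfold bf
  split_ifs with h h'
  · exact absurd h' (ne_of_lt h)
  · linarith
  · linarith
  · linarith

lemma bf_meas {VE : W → ℝ} (hVE : Measurable VE) (θ η : ℝ) : Measurable (bf VE θ η) := by
  unfold bf
  apply Measurable.add
  · exact Measurable.ite (measurableSet_lt hVE measurable_const) measurable_const measurable_const
  · exact measurable_const.mul
      (Measurable.ite (measurableSet_eq_fun hVE measurable_const) measurable_const measurable_const)

lemma intAux (μ : Measure W) [IsProbabilityMeasure μ] {f : W → ℝ} (hf : Measurable f)
    {C : ℝ} (hC : ∀ w, |f w| ≤ C) : Integrable f μ :=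
  (integrable_const C).mono' hf.aestronglyMeasurable (Filter.Eventually.of_forall fun w => hC w)

lemma keyA {VE : W → ℝ} {θ η u v : ℝ} {w : W} (hu : 0 ≤ u) (h0 : 0 ≤ η) (hv : v = VE w) :
    u * bf VE θ η w * v ≤ θ * (u * bf VE θ η w) := by
  unfold bf
  rcases lt_trichotomy (VE w) θ with h | h | h
  · rw [if_pos h, if_neg (ne_of_lt h), hv]
    nlinarith
  · rw [if_neg (by rw [h]; exact lt_irrefl θ), if_pos h, hv, h]
    ring_nf
    exact le_refl _
  · rw [if_neg (not_lt.mpr h.le), if_neg (ne_of_gt h)]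
    simp
  
lemma keyB {VE : W → ℝ} {θ1 θ2 η1 η2 u v : ℝ} {w : W} (hu : 0 ≤ u)
    (h1 : 0 ≤ η1) (h2 : 0 ≤ η2) (hθ : θ1 ≤ θ2) (hv : v = VE w) :
    θ1 * (u * bf VE θ2 η2 w) + u * bf VE θ1 η1 w * v
      ≤ u * bf VE θ2 η2 w * v + θ1 * (u * bf VE θ1 η1 w) := by
  have hb2 : 0 ≤ bf VE θ2 η2 w := bf_nonneg VE θ2 h2 w
  rcases lt_trichotomy (VE w) θ1 with h | h | h
  · have hlt2 : VE w < θ2 := lt_of_lt_of_le h hθ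
    have e1 : bf VE θ1 η1 w = 1 := by
      unfold bf; rw [if_pos h, if_neg (ne_of_lt h)]; ring
    have e2 : bf VE θ2 η2 w = 1 := by
      unfold bf; rw [if_pos hlt2, if_neg (ne_of_lt hlt2)]; ring
    rw [e1, e2]; ring_nf; exact le_refl _
  · rw [hv, h]; ring_nf; exact le_refl _
  · have e1 : bf VE θ1 η1 w = 0 := by
      unfold bf; rw [if_neg (not_lt.mpr h.le), if_neg (ne_of_gt h)]; ring
    rw [e1, hv]
    have : 0 ≤ u * bf VE θ2 η2 w * (VE w - θ1) :=
      mul_nonneg (mul_nonneg hu hb2) (by linarith)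
    nlinarith

end Stmt2Aux

open Stmt2Aux

theorem stmt2
    {W : Type*} [MeasurableSpace W] (μstar : Measure W) [IsProbabilityMeasure μstar]
    (ups VE : W → ℝ) (δ : ℝ) (hδ : 0 < δ)
    (hups : Measurable ups) (hups' : ∀ w, ups w ∈ Set.Icc δ 1)
    (hVE : Measurable VE) (hVEbdd : ∃ M : ℝ, ∀ w, |VE w| ≤ M)
    (μ1 μ2 θ1 θ2 η1 η2 : ℝ)
    (hμ1 : 0 < μ1) (hμ12 : μ1 < μ2) (hμ2 : μ2 ≤ ∫ w, ups w ∂μstar)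
    (hθ1 : θ1 = sSup {θ : ℝ | ∫ w, ups w * (if VE w < θ then (1:ℝ) else 0) ∂μstar ≤ μ1})
    (hθ2 : θ2 = sSup {θ : ℝ | ∫ w, ups w * (if VE w < θ then (1:ℝ) else 0) ∂μstar ≤ μ2})
    (hη1 : η1 ∈ Set.Icc (0:ℝ) 1) (hη2 : η2 ∈ Set.Icc (0:ℝ) 1)
    (heq1 : ∫ w, ups w * ((if VE w < θ1 then (1:ℝ) else 0)
        + η1 * (if VE w = θ1 then (1:ℝ) else 0)) ∂μstar = μ1)
    (heq2 : ∫ w, ups w * ((if VE w < θ2 then (1:ℝ) else 0)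
        + η2 * (if VE w = θ2 then (1:ℝ) else 0)) ∂μstar = μ2)
    (hη1min : ∀ η ∈ Set.Icc (0:ℝ) 1,
      (∫ w, ups w * ((if VE w < θ1 then (1:ℝ) else 0)
        + η * (if VE w = θ1 then (1:ℝ) else 0)) ∂μstar = μ1) → η1 ≤ η)
    (hη2min : ∀ η ∈ Set.Icc (0:ℝ) 1,
      (∫ w, ups w * ((if VE w < θ2 then (1:ℝ) else 0)
        + η * (if VE w = θ2 then (1:ℝ) else 0)) ∂μstar = μ2) → η2 ≤ η) :
    (∫ w, ups w * ((if VE w < θ1 then (1:ℝ) else 0)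
        + η1 * (if VE w = θ1 then (1:ℝ) else 0)) * VE w ∂μstar)
      / (∫ w, ups w * ((if VE w < θ1 then (1:ℝ) else 0)
        + η1 * (if VE w = θ1 then (1:ℝ) else 0)) ∂μstar)
    ≤ (∫ w, ups w * ((if VE w < θ2 then (1:ℝ) else 0)
        + η2 * (if VE w = θ2 then (1:ℝ) else 0)) * VE w ∂μstar)
      / (∫ w, ups w * ((if VE w < θ2 then (1:ℝ) else 0)
        + η2 * (if VE w = θ2 then (1:ℝ) else 0)) ∂μstar) := by
  obtain ⟨M, hM⟩ := hVEbdd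
  have huδ : ∀ w, δ ≤ ups w := fun w => (hups' w).1
  have hu0 : ∀ w, 0 ≤ ups w := fun w => hδ.le.trans (huδ w)
  have hu1 : ∀ w, ups w ≤ 1 := fun w => (hups' w).2
  have hη1' := hη1.1
  have hη2' := hη2.1
  -- restate goal / hypotheses in terms of bf
  change (∫ w, ups w * bf VE θ1 η1 w * VE w ∂μstar) / (∫ w, ups w * bf VE θ1 η1 w ∂μstar)
      ≤ (∫ w, ups w * bf VE θ2 η2 w * VE w ∂μstar) / (∫ w, ups w * bf VE θ2 η2 w ∂μstar)
  have hI1 : ∫ w, ups w * bf VE θ1 η1 w ∂μstar = μ1 := heq1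
  have hI2 : ∫ w, ups w * bf VE θ2 η2 w ∂μstar = μ2 := heq2
  -- integrability facts
  have intups : Integrable ups μstar := intAux μstar hups fun w =>
    abs_le.mpr ⟨by linarith [huδ w], hu1 w⟩
  have int1 : Integrable (fun w => ups w * bf VE θ1 η1 w) μstar := by
    refine intAux μstar (hups.mul (bf_meas hVE θ1 η1)) (C := 1) fun w => ?_
    rw [abs_mul, abs_of_nonneg (hu0 w), abs_of_nonneg (bf_nonneg VE θ1 hη1' w)]
    exact mul_le_one₀ (hu1 w) (bf_nonneg VE θ1 hη1' w) (bf_le_one VE θ1 hη1' hη1.2 w)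
  have int2 : Integrable (fun w => ups w * bf VE θ2 η2 w) μstar := by
    refine intAux μstar (hups.mul (bf_meas hVE θ2 η2)) (C := 1) fun w => ?_
    rw [abs_mul, abs_of_nonneg (hu0 w), abs_of_nonneg (bf_nonneg VE θ2 hη2' w)]
    exact mul_le_one₀ (hu1 w) (bf_nonneg VE θ2 hη2' w) (bf_le_one VE θ2 hη2' hη2.2 w)
  have intV1 : Integrable (fun w => ups w * bf VE θ1 η1 w * VE w) μstar := by
    refine intAux μstar ((hups.mul (bf_meas hVE θ1 η1)).mul hVE) (C := M) fun w => ?_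
    rw [abs_mul]
    calc |ups w * bf VE θ1 η1 w| * |VE w| ≤ 1 * M := by
          apply mul_le_mul _ (hM w) (abs_nonneg _) zero_le_one
          rw [abs_mul, abs_of_nonneg (hu0 w), abs_of_nonneg (bf_nonneg VE θ1 hη1' w)]
          exact mul_le_one₀ (hu1 w) (bf_nonneg VE θ1 hη1' w) (bf_le_one VE θ1 hη1' hη1.2 w)
      _ = M := one_mul M
  have intV2 : Integrable (fun w => ups w * bf VE θ2 η2 w * VE w) μstar := by
    refine intAux μstar ((hups.mul (bf_meas hVE θ2 η2)).mul hVE) (C := M) fun w => ?_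
    rw [abs_mul]
    calc |ups w * bf VE θ2 η2 w| * |VE w| ≤ 1 * M := by
          apply mul_le_mul _ (hM w) (abs_nonneg _) zero_le_one
          rw [abs_mul, abs_of_nonneg (hu0 w), abs_of_nonneg (bf_nonneg VE θ2 hη2' w)]
          exact mul_le_one₀ (hu1 w) (bf_nonneg VE θ2 hη2' w) (bf_le_one VE θ2 hη2' hη2.2 w)
      _ = M := one_mul M
  have intF : ∀ θ : ℝ, Integrable (fun w => ups w * (if VE w < θ then (1:ℝ) else 0)) μstar := by
    intro θ
    refine intAux μstar (hups.mul (Measurable.ite (measurableSet_lt hVE measurable_const)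
      measurable_const measurable_const)) (C := 1) fun w => ?_
    rw [abs_mul, abs_of_nonneg (hu0 w)]
    split_ifs <;> simp [hu1 w, hu0 w, abs_of_nonneg (hu0 w)]
  -- S1 nonempty
  have hS1ne : Set.Nonempty {θ : ℝ | ∫ w, ups w * (if VE w < θ then (1:ℝ) else 0) ∂μstar ≤ μ1} := by
    refine ⟨-(M+1), ?_⟩
    have h0 : ∀ w, ¬ (VE w < -(M+1)) := fun w => not_lt.mpr (by linarith [(abs_le.mp (hM w)).1])
    have : (∫ w, ups w * (if VE w < -(M+1) then (1:ℝ) else 0) ∂μstar) = 0 := by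
      have h1 : (∫ w, ups w * (if VE w < -(M+1) then (1:ℝ) else 0) ∂μstar)
          = ∫ (_ : W), (0:ℝ) ∂μstar :=
        integral_congr_ae (Filter.Eventually.of_forall fun w => by
          simp only [if_neg (h0 w), mul_zero])
      rw [h1, integral_zero]
    simp only [Set.mem_setOf_eq, this]
    exact hμ1.le
  -- θ1 ≤ θ2
  have hθ12 : θ1 ≤ θ2 := by
    by_cases hbdd : BddAbove {θ : ℝ | ∫ w, ups w * (if VE w < θ then (1:ℝ) else 0) ∂μstar ≤ μ2}
    · rw [hθ1, hθ2]
      exact csSup_le_csSup hbdd hS1ne fun θ hθ => le_trans hθ hμ12.le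
    · -- unbounded case: μ2 = ∫ ups and θ2 = 0
      have hθ2z : θ2 = 0 := by rw [hθ2]; exact Real.sSup_of_not_bddAbove hbdd
      obtain ⟨θ0, hθ0S, hMθ0⟩ := (not_bddAbove_iff.mp hbdd) M
      have hF0 : (∫ w, ups w * (if VE w < θ0 then (1:ℝ) else 0) ∂μstar) = ∫ w, ups w ∂μstar := by
        refine integral_congr_ae (Filter.Eventually.of_forall fun w => ?_)
        simp [lt_of_le_of_lt (le_trans (le_abs_self _) (hM w)) hMθ0]
      have hμ2eq : μ2 = ∫ w, ups w ∂μstar := le_antisymm hμ2 (by rw [← hF0]; exact hθ0S)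
      -- a.e. VE ≤ 0
      have hzero : (∫ w, ups w * (1 - bf VE θ2 η2 w) ∂μstar) = 0 := by
        have : (fun w => ups w * (1 - bf VE θ2 η2 w))
            = fun w => ups w - ups w * bf VE θ2 η2 w := by funext w; ring
        rw [this, integral_sub intups int2, hI2, hμ2eq, sub_self]
      have hnn : 0 ≤ fun w => ups w * (1 - bf VE θ2 η2 w) := fun w =>
        mul_nonneg (hu0 w) (sub_nonneg.mpr (bf_le_one VE θ2 hη2' hη2.2 w))
      have hintz : Integrable (fun w => ups w * (1 - bf VE θ2 η2 w)) μstar := by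
        have : (fun w => ups w * (1 - bf VE θ2 η2 w))
            = fun w => ups w - ups w * bf VE θ2 η2 w := by funext w; ring
        rw [this]; exact intups.sub int2
      have haez := (integral_eq_zero_iff_of_nonneg hnn hintz).mp hzero
      have hae : ∀ᵐ w ∂μstar, VE w ≤ 0 := by
        filter_upwards [haez] with w hw
        simp only [Pi.zero_apply] at hw
        have hb1 : bf VE θ2 η2 w = 1 := by
          rcases mul_eq_zero.mp hw with h | h
          · exact absurd h (ne_of_gt (hδ.trans_le (huδ w)))
          · linarith
        by_contra hp
        push_neg at hp
        rw [hθ2z] at hb1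
        unfold bf at hb1
        rw [if_neg (not_lt.mpr hp.le), if_neg (ne_of_gt hp)] at hb1
        norm_num at hb1
      rw [hθ1, hθ2z]
      refine csSup_le hS1ne fun θ hθS => ?_
      by_contra hpos
      push_neg at hpos
      have hFeq : (∫ w, ups w * (if VE w < θ then (1:ℝ) else 0) ∂μstar)
          = ∫ w, ups w ∂μstar := by
        refine integral_congr_ae ?_
        filter_upwards [hae] with w hw
        rw [if_pos (lt_of_le_of_lt hw hpos), mul_one]
      rw [Set.mem_setOf_eq, hFeq, ← hμ2eq] at hθS
      linarith
  -- main computation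
  have hμ2pos : (0:ℝ) < μ2 := hμ1.trans hμ12
  rw [hI1, hI2, div_le_div_iff₀ hμ1 hμ2pos]
  set N1 := ∫ w, ups w * bf VE θ1 η1 w * VE w ∂μstar with hN1
  set N2 := ∫ w, ups w * bf VE θ2 η2 w * VE w ∂μstar with hN2
  have ha : N1 ≤ θ1 * μ1 := by
    rw [hN1, ← hI1, ← integral_const_mul]
    exact integral_mono intV1 (int1.const_mul θ1)
      (fun w => keyA (hu0 w) hη1' rfl)
  have hb : θ1 * μ2 + N1 ≤ N2 + θ1 * μ1 := by
    have intL : Integrable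
        (fun w => θ1 * (ups w * bf VE θ2 η2 w) + ups w * bf VE θ1 η1 w * VE w) μstar :=
      (int2.const_mul θ1).add intV1
    have intR : Integrable
        (fun w => ups w * bf VE θ2 η2 w * VE w + θ1 * (ups w * bf VE θ1 η1 w)) μstar :=
      intV2.add (int1.const_mul θ1)
    have h := integral_mono intL intR (fun w => keyB (hu0 w) hη1' hη2' hθ12 rfl)
    rwa [integral_add (int2.const_mul θ1) intV1, integral_add intV2 (int1.const_mul θ1),
      integral_const_mul, integral_const_mul, hI1, hI2, ← hN1, ← hN2] at h
  nlinarith [mul_le_mul_of_nonneg_right ha (sub_nonneg.mpr hμ12.le),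
    mul_le_mul_of_nonneg_right hb hμ1.le]
end

section
/- Let (W, μ★) be a probability space, and let VEₙ, VE⁰ : W → ℝ be measurable with ∥VEₙ − VE⁰∥_{L²(μ★)} =: εₙ. Fix θ̂ ∈ ℝ and suppose μ★{VE⁰ = θ̂} = 0. Then for every t > 0: ∫ |1{VEₙ < θ̂} − 1{VE⁰ < θ̂}| dμ★ ≤ μ★{0 ≤ |VE⁰ − θ̂| ≤ t} + εₙ²/t². -/
open MeasureTheory

theorem stmt6
    {W : Type*} [MeasurableSpace W] (μstar : Measure W) [IsProbabilityMeasure μstar]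
    (VEn VE0 : W → ℝ) (hVEn : Measurable VEn) (hVE0 : Measurable VE0)
    (ε θhat : ℝ) (hε0 : 0 ≤ ε)
    (hε : ε ^ 2 = ∫ w, (VEn w - VE0 w) ^ 2 ∂μstar)
    (hL2 : Integrable (fun w => (VEn w - VE0 w) ^ 2) μstar)
    (hnoatom : μstar {w | VE0 w = θhat} = 0) :
    ∀ t : ℝ, 0 < t →
      ∫ w, |(if VEn w < θhat then (1:ℝ) else 0) - (if VE0 w < θhat then (1:ℝ) else 0)| ∂μstar
        ≤ (μstar {w | |VE0 w - θhat| ≤ t}).toReal + ε ^ 2 / t ^ 2 := by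
  intro t ht
  set D : Set W := ({w | VEn w < θhat} \ {w | VE0 w < θhat}) ∪
      ({w | VE0 w < θhat} \ {w | VEn w < θhat}) with hD
  have hDm : MeasurableSet D := by
    apply MeasurableSet.union <;> apply MeasurableSet.diff <;>
      first
        | exact measurableSet_lt hVEn measurable_const
        | exact measurableSet_lt hVE0 measurable_const
  set A : Set W := {w | |VE0 w - θhat| ≤ t} with hA
  set B : Set W := {w | t ^ 2 ≤ (VEn w - VE0 w) ^ 2} with hB
  -- integrand equals indicator of D
  have hfun : ∀ w, |(if VEn w < θhat then (1:ℝ) else 0) - (if VE0 w < θhat then (1:ℝ) else 0)|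
      = D.indicator (fun _ => (1:ℝ)) w := by
    intro w
    by_cases h1 : VEn w < θhat <;> by_cases h2 : VE0 w < θhat <;>
      simp [h1, h2, Set.indicator, hD, Set.mem_diff]
  have hint : ∫ w, |(if VEn w < θhat then (1:ℝ) else 0) - (if VE0 w < θhat then (1:ℝ) else 0)|
      ∂μstar = (μstar D).toReal := by
    rw [show (fun w => |(if VEn w < θhat then (1:ℝ) else 0) -
        (if VE0 w < θhat then (1:ℝ) else 0)|) = D.indicator (fun _ => (1:ℝ)) from funext hfun]
    rw [integral_indicator_const _ hDm]; simp; rfl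
  -- D ⊆ A ∪ B
  have hsub : D ⊆ A ∪ B := by
    intro w hw
    have key : |VE0 w - θhat| ≤ |VEn w - VE0 w| := by
      rcases hw with ⟨h1, h2⟩ | ⟨h1, h2⟩
      · simp only [Set.mem_setOf_eq, not_lt] at h1 h2
        rw [abs_of_nonneg (by linarith), abs_of_nonpos (by linarith)]; linarith
      · simp only [Set.mem_setOf_eq, not_lt] at h1 h2
        rw [abs_of_nonpos (by linarith), abs_of_nonneg (by linarith)]; linarith
    by_cases hAw : |VE0 w - θhat| ≤ t
    · exact Or.inl hAw
    · refine Or.inr ?_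
      have h1 : t ≤ |VEn w - VE0 w| := le_trans (le_of_not_ge hAw) key
      have := sq_abs (VEn w - VE0 w)
      calc t ^ 2 ≤ |VEn w - VE0 w| ^ 2 := by
            exact pow_le_pow_left₀ ht.le h1 2
        _ = (VEn w - VE0 w) ^ 2 := sq_abs _
  -- Chebyshev
  have hcheb : (μstar B).toReal ≤ ε ^ 2 / t ^ 2 := by
    have hnn : 0 ≤ᵐ[μstar] fun w => (VEn w - VE0 w) ^ 2 :=
      Filter.Eventually.of_forall fun w => sq_nonneg _
    have := mul_meas_ge_le_integral_of_nonneg hnn hL2 (t ^ 2)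
    rw [← hε] at this
    have ht2 : (0:ℝ) < t ^ 2 := by positivity
    rw [le_div_iff₀ ht2]
    calc (μstar B).toReal * t ^ 2 = t ^ 2 * (μstar {w | t ^ 2 ≤ (VEn w - VE0 w) ^ 2}).toReal := by
          rw [mul_comm]
      _ ≤ ε ^ 2 := this
  have hfin : ∀ s : Set W, μstar s ≠ ⊤ := fun s => measure_ne_top _ _
  have hmono : (μstar D).toReal ≤ (μstar A).toReal + (μstar B).toReal := by
    have h1 : μstar D ≤ μstar A + μstar B :=
      le_trans (measure_mono hsub) (measure_union_le A B)
    have := ENNReal.toReal_mono (by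
      exact ENNReal.add_ne_top.mpr ⟨hfin A, hfin B⟩) h1
    rwa [ENNReal.toReal_add (hfin A) (hfin B)] at this
  rw [hint]
  exact le_trans hmono (by linarith)
end

section
/- Let (W, μ★) be a probability space, λ, υ : W → [0,1] measurable with 0 < δ ≤ υ − λ ≤ 1 pointwise, and VE : W → ℝ bounded measurable with μ★{VE = θ⁰} = 0. Let β⁰ := 1{VE < θ⁰} and βₙ := 1{VEₙ < θₙ} for bounded measurable VEₙ and θₙ ∈ ℝ with ∥VEₙ − VE∥_∞ ≤ εₙ and |θₙ − θ⁰| ≤ εₙ. Suppose there exist C, α > 0 such that μ★{0 < |VE − θ⁰| ≤ t} ≤ C t^α for all t > 0. Then |∫ (υ−λ)(βₙ − β⁰)(VE − θ⁰) dμ★| ≤ 2εₙ · C·(2εₙ)^α. -/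
open MeasureTheory

theorem stmt11
    {W : Type*} [MeasurableSpace W] (μstar : Measure W) [IsProbabilityMeasure μstar]
    (lam ups VE VEn : W → ℝ) (δ θ0 θn εn C α : ℝ)
    (hδ : 0 < δ)
    (hlam : Measurable lam) (hups : Measurable ups)
    (hVE : Measurable VE) (hVEn : Measurable VEn)
    (hlam01 : ∀ w, lam w ∈ Set.Icc (0:ℝ) 1)
    (hups01 : ∀ w, ups w ∈ Set.Icc (0:ℝ) 1)
    (hgap : ∀ w, δ ≤ ups w - lam w ∧ ups w - lam w ≤ 1)
    (hVEbdd : ∃ M : ℝ, ∀ w, |VE w| ≤ M)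
    (hVEnbdd : ∃ M : ℝ, ∀ w, |VEn w| ≤ M)
    (hnoatom : μstar {w | VE w = θ0} = 0)
    (hεn0 : 0 ≤ εn)
    (hVEclose : ∀ w, |VEn w - VE w| ≤ εn)
    (hθclose : |θn - θ0| ≤ εn)
    (hC : 0 < C) (hα : 0 < α)
    (hmargin : ∀ t : ℝ, 0 < t →
      (μstar {w | 0 < |VE w - θ0| ∧ |VE w - θ0| ≤ t}).toReal ≤ C * t ^ α) :
    |∫ w, (ups w - lam w)
        * ((if VEn w < θn then (1:ℝ) else 0) - (if VE w < θ0 then (1:ℝ) else 0))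
        * (VE w - θ0) ∂μstar|
      ≤ 2 * εn * (C * (2 * εn) ^ α) := by
  set g : W → ℝ := fun w => (ups w - lam w)
      * ((if VEn w < θn then (1:ℝ) else 0) - (if VE w < θ0 then (1:ℝ) else 0))
      * (VE w - θ0) with hg
  rcases hεn0.lt_or_eq with hεpos | hεz
  swap
  · -- εn = 0
    have hzero : ∀ w, g w = 0 := by
      intro w
      have h1 : VEn w = VE w := by
        have := hVEclose w; rw [← hεz] at this
        have := abs_nonneg (VEn w - VE w)
        have : |VEn w - VE w| = 0 := le_antisymm (by linarith) (abs_nonneg _)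
        have := abs_eq_zero.mp this; linarith
      have h2 : θn = θ0 := by
        rw [← hεz] at hθclose
        have := abs_eq_zero.mp (le_antisymm hθclose (abs_nonneg _)); linarith
      simp [hg, h1, h2]
    have : ∫ w, g w ∂μstar = 0 := by
      simp [funext hzero]
    rw [hg] at this
    rw [this, ← hεz]
    simp [Real.zero_rpow]
  · set S : Set W := {w | 0 < |VE w - θ0| ∧ |VE w - θ0| ≤ 2 * εn} with hS
    have hSmeas : MeasurableSet S := by
      apply MeasurableSet.inter
      · exact measurableSet_lt measurable_const ((hVE.sub measurable_const).abs)
      · exact measurableSet_le ((hVE.sub measurable_const).abs) measurable_const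
    have hbound : ∀ w, |g w| ≤ S.indicator (fun _ => 2 * εn) w := by
      intro w
      by_cases hd : (if VEn w < θn then (1:ℝ) else 0) = (if VE w < θ0 then (1:ℝ) else 0)
      · have : g w = 0 := by rw [hg]; simp [hd]
        rw [this, abs_zero]
        exact Set.indicator_nonneg (fun _ _ => by linarith) w
      · have hθ1 := abs_le.mp hθclose
        have hV1 := abs_le.mp (hVEclose w)
        have habs : |VE w - θ0| ≤ 2 * εn := by
          rw [abs_le]
          constructor <;> (by_cases h1 : VEn w < θn <;> by_cases h2 : VE w < θ0 <;>
            simp [h1, h2] at hd ⊢ <;> linarith)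
        by_cases hz : VE w = θ0
        · have : g w = 0 := by rw [hg]; simp [hz]
          rw [this, abs_zero]
          exact Set.indicator_nonneg (fun _ _ => by linarith) w
        · have hw : w ∈ S := ⟨abs_pos.mpr (sub_ne_zero.mpr hz), habs⟩
          rw [Set.indicator_of_mem hw]
          have h1 : |ups w - lam w| ≤ 1 := by
            have := hgap w; rw [abs_le]; constructor <;> linarith
          have h2 : |(if VEn w < θn then (1:ℝ) else 0) - (if VE w < θ0 then (1:ℝ) else 0)| ≤ 1 := by
            split_ifs <;> norm_num
          have : |g w| = |ups w - lam w| *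
              |(if VEn w < θn then (1:ℝ) else 0) - (if VE w < θ0 then (1:ℝ) else 0)| *
              |VE w - θ0| := by rw [hg]; simp [abs_mul]
          rw [this]
          calc |ups w - lam w| * |(if VEn w < θn then (1:ℝ) else 0) - (if VE w < θ0 then (1:ℝ) else 0)| * |VE w - θ0|
              ≤ 1 * 1 * (2 * εn) := by
                gcongr <;> first | exact abs_nonneg _ | positivity
            _ = 2 * εn := by ring
    have hgmeas : Measurable g := by
      apply Measurable.mul
      apply Measurable.mul (hups.sub hlam)
      · exact (Measurable.ite (measurableSet_lt hVEn measurable_const) measurable_const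
          measurable_const).sub
          (Measurable.ite (measurableSet_lt hVE measurable_const) measurable_const measurable_const)
      · exact hVE.sub measurable_const
    have hgInt : Integrable g μstar := by
      apply (integrable_const (2 * εn)).mono' hgmeas.aestronglyMeasurable
      filter_upwards with w
      rw [Real.norm_eq_abs]
      exact le_trans (hbound w) (Set.indicator_le_self' (fun _ _ => by linarith) w)
    have hindInt : Integrable (S.indicator (fun _ => 2 * εn)) μstar :=
      (integrable_const (2 * εn)).indicator hSmeas
    have step1 : |∫ w, g w ∂μstar| ≤ ∫ w, S.indicator (fun _ => 2 * εn) w ∂μstar := by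
      calc |∫ w, g w ∂μstar| ≤ ∫ w, |g w| ∂μstar := (norm_integral_le_integral_norm g).trans_eq (by simp [Real.norm_eq_abs])
        _ ≤ ∫ w, S.indicator (fun _ => 2 * εn) w ∂μstar :=
            integral_mono hgInt.abs hindInt hbound
    have step2 : ∫ w, S.indicator (fun _ => 2 * εn) w ∂μstar = (μstar S).toReal * (2 * εn) := by
      rw [integral_indicator_const _ hSmeas]; simp [mul_comm, Measure.real]
    have hμ : (μstar S).toReal ≤ C * (2 * εn) ^ α := hmargin (2 * εn) (by linarith)
    have := step1
    rw [step2] at this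
    calc |∫ w, g w ∂μstar| ≤ (μstar S).toReal * (2 * εn) := this
      _ ≤ (C * (2 * εn) ^ α) * (2 * εn) := by
          have h2 : (0:ℝ) ≤ 2 * εn := by linarith
          exact mul_le_mul_of_nonneg_right hμ h2
      _ = 2 * εn * (C * (2 * εn) ^ α) := by ring
end
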